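/- (The backward representer lower-bounds the state likelihood.) Suppose for each 1 ≤ t ≤ T: (a) for every x, ∫ q_t(x,y) μ(dy) = 1; (b) β_T ≡ 1; (c) for every x, u_t(x,y) > 0 for μ-almost every y in {y : q_t(x,y) > 0}, the function y ↦ q_t(x,y)·log(β_t(y)·u_t(x,y)/q_t(x,y)) (set to 0 where q_t(x,y) = 0) is μ-integrable, and log β_{t−1}(x) = ∫ q_t(x,y)·log(β_t(y)·u_t(x,y)/q_t(x,y)) μ(dy). Then for every 0 ≤ t ≤ T and every x ∈ E, the backward representer is dominated by the Bayesian backward value function: (β_t(x) : [0,∞]) ≤ b_t(x). -/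

import Mathlib

open MeasureTheory
open scoped ENNReal


lemma gibbs_key {E : Type*} [MeasurableSpace E] (μ : Measure E)
    (q h : E → ℝ) (c : ℝ)
    (hqm : Measurable q) (hhm : Measurable h)
    (hq0 : ∀ y, 0 ≤ q y) (hh0 : ∀ y, 0 ≤ h y)
    (hq1 : ∫ y, q y ∂μ = 1)
    (hpos : ∀ᵐ y ∂μ, 0 < q y → 0 < h y)
    (hint : Integrable (fun y => if q y = 0 then 0 else q y * Real.log (h y / q y)) μ)
    (hc : Real.log c = ∫ y, (if q y = 0 then 0 else q y * Real.log (h y / q y)) ∂μ)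
    (hcpos : 0 < c) :
    ENNReal.ofReal c ≤ ∫⁻ y, ENNReal.ofReal (h y) ∂μ := by
  rcases eq_or_ne (∫⁻ y, ENNReal.ofReal (h y) ∂μ) ∞ with htop | htop
  · simp [htop]
  have hhint : Integrable h μ := by
    refine ⟨hhm.aestronglyMeasurable, ?_⟩
    rw [hasFiniteIntegral_iff_ofReal (Filter.Eventually.of_forall hh0)]
    exact htop.lt_top
  have hqint : Integrable q μ := by
    by_contra hn
    rw [integral_undef hn] at hq1
    exact one_ne_zero hq1.symm
  set I := ∫ y, h y ∂μ with hI
  have hIpos : 0 < I := by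
    rcases lt_or_eq_of_le (integral_nonneg (show (0 : E → ℝ) ≤ h from hh0)) with h' | h'
    · exact h'
    exfalso
    have hz : h =ᵐ[μ] 0 := (integral_eq_zero_iff_of_nonneg hh0 hhint).mp h'.symm
    have hqz : q =ᵐ[μ] 0 := by
      filter_upwards [hz, hpos] with y h1 h2
      by_contra hqy
      have : 0 < q y := lt_of_le_of_ne (hq0 y) (Ne.symm hqy)
      have := h2 this
      simp only [Pi.zero_apply] at h1
      rw [h1] at this
      exact lt_irrefl 0 this
    rw [integral_congr_ae hqz] at hq1
    simp at hq1
  -- pointwise inequality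
  have hpt : ∀ᵐ y ∂μ, (if q y = 0 then 0 else q y * Real.log (h y / q y))
      ≤ h y / I - q y + q y * Real.log I := by
    filter_upwards [hpos] with y hy
    by_cases hq : q y = 0
    · rw [if_pos hq, hq]
      have : 0 ≤ h y / I := div_nonneg (hh0 y) hIpos.le
      linarith
    · have hqpos : 0 < q y := lt_of_le_of_ne (hq0 y) (Ne.symm hq)
      have hhpos : 0 < h y := hy hqpos
      rw [if_neg hq]
      have hsplit : Real.log (h y / q y) = Real.log (h y / (I * q y)) + Real.log I := by
        rw [Real.log_div hhpos.ne' hq, Real.log_div hhpos.ne' (by positivity),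
          Real.log_mul hIpos.ne' hq]
        ring
      have hle : Real.log (h y / (I * q y)) ≤ h y / (I * q y) - 1 :=
        Real.log_le_sub_one_of_pos (by positivity)
      have := mul_le_mul_of_nonneg_left hle (hq0 y)
      have heq : q y * (h y / (I * q y) - 1) = h y / I - q y := by
        field_simp
      rw [hsplit, mul_add]
      rw [heq] at this
      linarith
  have hA : Integrable (fun y => h y / I - q y) μ := by
    exact (hhint.div_const I).sub hqint
  have hB : Integrable (fun y => q y * Real.log I) μ := by
    exact hqint.mul_const _
  have hC : Integrable (fun y => h y / I) μ := by exact hhint.div_const I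
  have hrint : Integrable (fun y => h y / I - q y + q y * Real.log I) μ := by
    exact hA.add hB
  have hle : Real.log c ≤ Real.log I := by
    rw [hc]
    calc ∫ y, (if q y = 0 then 0 else q y * Real.log (h y / q y)) ∂μ
        ≤ ∫ y, (h y / I - q y + q y * Real.log I) ∂μ := integral_mono_ae hint hrint hpt
      _ = Real.log I := by
          rw [integral_add hA hB, integral_sub hC hqint, integral_div, integral_mul_const,
            hq1, ← hI]
          field_simp
          ring
  have hcI : c ≤ I := (Real.log_le_log_iff hcpos hIpos).mp hle
  calc ENNReal.ofReal c ≤ ENNReal.ofReal I := ENNReal.ofReal_le_ofReal hcI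
    _ = ∫⁻ y, ENNReal.ofReal (h y) ∂μ :=
        ofReal_integral_eq_lintegral_ofReal hhint (Filter.Eventually.of_forall hh0)


/-- **The backward representer lower-bounds the state likelihood.**
With `u t` the one-step unnormalized transition densities, `q t` variational forward
transition kernel densities (probability densities in the second argument), `β t` the
positive backward value representers satisfying `β T ≡ 1` and the variational backward
value recursion, and `b t` the Bayesian backward value functions (`b T ≡ 1`,
`b (t-1) x = ∫ b t y * u t (x,y) μ(dy)`), one has `β t x ≤ b t x` for all `0 ≤ t ≤ T`
and all `x`. -/
theorem backward_representer_le_state_likelihood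
    {E : Type*} [MeasurableSpace E] (μ : Measure E) [SigmaFinite μ] (T : ℕ)
    (u : ℕ → E × E → ℝ) (hum : ∀ t, Measurable (u t)) (hu0 : ∀ t p, 0 ≤ u t p)
    (q : ℕ → E × E → ℝ) (hqm : ∀ t, Measurable (q t)) (hq0 : ∀ t p, 0 ≤ q t p)
    (β : ℕ → E → ℝ) (hβm : ∀ t, Measurable (β t)) (hβpos : ∀ t x, 0 < β t x)
    (b : ℕ → E → ℝ≥0∞)
    (hbT : ∀ x, b T x = 1)
    (hbrec : ∀ t, 1 ≤ t → t ≤ T → ∀ x,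
      b (t - 1) x = ∫⁻ y, b t y * ENNReal.ofReal (u t (x, y)) ∂μ)
    -- (a): each `q t (x, ·)` is a probability density
    (ha : ∀ t, 1 ≤ t → t ≤ T → ∀ x, (∫ y, q t (x, y) ∂μ) = 1)
    -- (b): terminal condition of the representer
    (hβT : ∀ x, β T x = 1)
    -- (c): positivity, integrability, and the variational backward value recursion
    (hc₁ : ∀ t, 1 ≤ t → t ≤ T → ∀ x,
      ∀ᵐ y ∂μ, 0 < q t (x, y) → 0 < u t (x, y))
    (hc₂ : ∀ t, 1 ≤ t → t ≤ T → ∀ x,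
      Integrable (fun y => if q t (x, y) = 0 then 0
        else q t (x, y) * Real.log (β t y * u t (x, y) / q t (x, y))) μ)
    (hc₃ : ∀ t, 1 ≤ t → t ≤ T → ∀ x,
      Real.log (β (t - 1) x) = ∫ y,
        (if q t (x, y) = 0 then 0
         else q t (x, y) * Real.log (β t y * u t (x, y) / q t (x, y))) ∂μ) :
    ∀ t, t ≤ T → ∀ x : E, ENNReal.ofReal (β t x) ≤ b t x := by
  suffices H : ∀ k, k ≤ T → ∀ x, ENNReal.ofReal (β (T - k) x) ≤ b (T - k) x by
    intro t ht x
    have := H (T - t) (Nat.sub_le _ _) x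
    rwa [Nat.sub_sub_self ht] at this
  intro k
  induction k with
  | zero =>
    intro _ x
    simp [hβT, hbT]
  | succ k ih =>
    intro hk x
    have h1t : 1 ≤ T - k := by omega
    have htT : T - k ≤ T := Nat.sub_le _ _
    have hsub : T - (k + 1) = (T - k) - 1 := by omega
    set t := T - k with ht
    rw [hsub, hbrec t h1t htT x]
    have hkey : ENNReal.ofReal (β (t - 1) x)
        ≤ ∫⁻ y, ENNReal.ofReal (β t y * u t (x, y)) ∂μ := by
      refine gibbs_key μ (fun y => q t (x, y)) (fun y => β t y * u t (x, y)) (β (t - 1) x)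
        ((hqm t).comp measurable_prodMk_left)
        ((hβm t).mul ((hum t).comp measurable_prodMk_left))
        (fun y => hq0 t _) (fun y => mul_nonneg (hβpos t y).le (hu0 t _))
        (ha t h1t htT x) ?_ (hc₂ t h1t htT x) (hc₃ t h1t htT x) (hβpos _ x)
      filter_upwards [hc₁ t h1t htT x] with y hy hq
      exact mul_pos (hβpos t y) (hy hq)
    refine hkey.trans (lintegral_mono fun y => ?_)
    rw [ENNReal.ofReal_mul (hβpos t y).le]
    exact mul_le_mul_left (ih (by omega) y) _
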